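/- Let 0 ≤ s ≤ g−2 and let w_0, …, w_s ∈ H be pairwise ω-orthogonal vectors, each with a_1-coordinate equal to 1, with gcd(w_0,…,w_s) = 1. Then there exist vectors x_1, …, x_{g−1−s} ∈ H such that: each x_j has a_1-coordinate equal to 1 and b_1-coordinate equal to the b_1-coordinate of w_0; each pr₂(x_j) is a primitive vector of H₂; the combined family (w_0, …, w_s, x_1, …, x_{g−1−s}) is pairwise ω-orthogonal with gcd(w_0,…,w_s,x_1,…,x_{g−1−s}) = 1; and moreover, for every subfamily (w_{i_0},…,w_{i_r}) of (w_0,…,w_s) such that gcd(pr₂(w_{i_0}),…,pr₂(w_{i_r})) = 1, one also has gcd(pr₂(w_{i_0}),…,pr₂(w_{i_r}),pr₂(x_1),…,pr₂(x_{g−1−s})) = 1. -/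

import Mathlib

namespace Paper

/-- The standard symplectic form on `R^{2g}` with respect to the basis
`a_1, b_1, …, a_g, b_g` (coordinates `2i, 2i+1` for `a_{i+1}, b_{i+1}`). -/
def symp {R : Type*} [CommRing R] {g : ℕ} (x y : Fin (2 * g) → R) : R :=
  ∑ i : Fin g,
    (x ⟨2 * i.1, by omega⟩ * y ⟨2 * i.1 + 1, by omega⟩ -
      x ⟨2 * i.1 + 1, by omega⟩ * y ⟨2 * i.1, by omega⟩)

theorem symp_add_left {R : Type*} [CommRing R] {g : ℕ} (x y a : Fin (2 * g) → R) :
    symp (x + y) a = symp x a + symp y a := by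
  unfold symp
  rw [← Finset.sum_add_distrib]
  exact Finset.sum_congr rfl fun i _ => by simp only [Pi.add_apply]; ring

theorem symp_smul_left {R : Type*} [CommRing R] {g : ℕ} (c : R) (x a : Fin (2 * g) → R) :
    symp (c • x) a = c * symp x a := by
  unfold symp
  rw [Finset.mul_sum]
  exact Finset.sum_congr rfl fun i _ => by simp only [Pi.smul_apply, smul_eq_mul]; ring

theorem symp_zero_left {R : Type*} [CommRing R] {g : ℕ} (a : Fin (2 * g) → R) :
    symp (0 : Fin (2 * g) → R) a = 0 := by
  unfold symp; simp

/-- The orthogonal complement `A^⊥ = {x | ω(x,a) = 0 for all a ∈ A}`. -/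
def perp {R : Type*} [CommRing R] {g : ℕ} (A : Set (Fin (2 * g) → R)) :
    Submodule R (Fin (2 * g) → R) where
  carrier := {x | ∀ a ∈ A, symp x a = 0}
  add_mem' := by
    intro x y hx hy a ha
    rw [symp_add_left, hx a ha, hy a ha, add_zero]
  zero_mem' := by
    intro a ha
    exact symp_zero_left a
  smul_mem' := by
    intro c x hx a ha
    rw [symp_smul_left, hx a ha, mul_zero]

/-- The submodule of vectors whose first `m` coordinates vanish.
`H_k = coordZero R (2*g) (2*(k-1))`, and `H₂ = coordZero R (2*(g+1)) 2`. -/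
def coordZero (R : Type*) [CommRing R] (n m : ℕ) : Submodule R (Fin n → R) where
  carrier := {v | ∀ j : Fin n, (j : ℕ) < m → v j = 0}
  add_mem' := by
    intro x y hx hy j hj
    have h1 := hx j hj
    have h2 := hy j hj
    simp [Pi.add_apply, h1, h2]
  zero_mem' := by intro j hj; rfl
  smul_mem' := by
    intro c x hx j hj
    have h1 := hx j hj
    simp [Pi.smul_apply, h1]

/-- The standard basis vector `a_{i+1}` (`i` is 0-indexed). -/
def stdA (R : Type*) [CommRing R] (g i : ℕ) : Fin (2 * g) → R :=
  fun j => if (j : ℕ) = 2 * i then 1 else 0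

/-- The standard basis vector `b_{i+1}` (`i` is 0-indexed). -/
def stdB (R : Type*) [CommRing R] (g i : ℕ) : Fin (2 * g) → R :=
  fun j => if (j : ℕ) = 2 * i + 1 then 1 else 0

/-- Regard an integer vector as a rational vector. -/
def qcast {n : ℕ} (v : Fin n → ℤ) : Fin n → ℚ := fun j => (v j : ℚ)

/-- The projection `pr₂` deleting the `a_1`- and `b_1`-coordinates. -/
def pr2 {R : Type*} [CommRing R] {n : ℕ} (v : Fin n → R) : Fin n → R :=
  fun j => if (j : ℕ) < 2 then 0 else v j

/-- `gcd(v_1, …, v_m) = 1`: the vectors are linearly independent and their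
ℤ-span is a direct summand. -/
def IsUnimodular {n m : ℕ} (v : Fin m → Fin n → ℤ) : Prop :=
  LinearIndependent ℤ v ∧
    ∃ C : Submodule ℤ (Fin n → ℤ), IsCompl (Submodule.span ℤ (Set.range v)) C

/-- A primitive vector. -/
def Primitive {n : ℕ} (v : Fin n → ℤ) : Prop := IsUnimodular ![v]

/-- The entries of `w` are pairwise `ω`-orthogonal. -/
def PairwiseOrth {g m : ℕ} (w : Fin m → Fin (2 * g) → ℤ) : Prop :=
  ∀ i j, i ≠ j → symp (w i) (w j) = 0

/-- `Λ³ W`: the span of all wedges of three vectors from `W` inside the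
exterior algebra. -/
def wedge3 {g : ℕ} (W : Submodule ℚ (Fin (2 * g) → ℚ)) :
    Submodule ℚ (ExteriorAlgebra ℚ (Fin (2 * g) → ℚ)) :=
  Submodule.span ℚ {x | ∃ z₁ ∈ W, ∃ z₂ ∈ W, ∃ z₃ ∈ W,
    x = ExteriorAlgebra.ι ℚ z₁ * ExteriorAlgebra.ι ℚ z₂ * ExteriorAlgebra.ι ℚ z₃}

/-- `u ∧ Λ² W`. -/
def uWedge2 {g : ℕ} (u : Fin (2 * g) → ℚ) (W : Submodule ℚ (Fin (2 * g) → ℚ)) :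
    Submodule ℚ (ExteriorAlgebra ℚ (Fin (2 * g) → ℚ)) :=
  Submodule.span ℚ {x | ∃ z₁ ∈ W, ∃ z₂ ∈ W,
    x = ExteriorAlgebra.ι ℚ u * ExteriorAlgebra.ι ℚ z₁ * ExteriorAlgebra.ι ℚ z₂}

/-- `u ∧ u' ∧ W`. -/
def uuWedge1 {g : ℕ} (u u' : Fin (2 * g) → ℚ) (W : Submodule ℚ (Fin (2 * g) → ℚ)) :
    Submodule ℚ (ExteriorAlgebra ℚ (Fin (2 * g) → ℚ)) :=
  Submodule.span ℚ {x | ∃ z ∈ W,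
    x = ExteriorAlgebra.ι ℚ u * ExteriorAlgebra.ι ℚ u' * ExteriorAlgebra.ι ℚ z}

/-- The simplicial differential: on the summand indexed by `w` it sends `z` to
`Σ_j (-1)^j · z` placed in the summand indexed by `∂_j w`. -/
noncomputable def diff (g p : ℕ)
    (ξ : (Fin (p + 1) → Fin (2 * g) → ℤ) →₀ ExteriorAlgebra ℚ (Fin (2 * g) → ℚ)) :
    (Fin p → Fin (2 * g) → ℤ) →₀ ExteriorAlgebra ℚ (Fin (2 * g) → ℚ) :=
  ξ.sum fun w z =>
    ∑ j : Fin (p + 1), ((-1 : ℚ) ^ (j : ℕ)) • Finsupp.single (fun i => w (j.succAbove i)) z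

/-- The gcd of the determinants of all maximal square submatrices of the matrix
whose columns are the `v i`. -/
def vgcd {ι : Type*} [Fintype ι] {m : ℕ} (v : Fin m → ι → ℤ) : ℕ :=
  Finset.univ.gcd fun r : Fin m → ι => (Matrix.det (Matrix.of fun i j => v j (r i))).natAbs

section Aux

variable {R : Type*} [CommRing R] {g : ℕ}

theorem symp_swap (x y : Fin (2 * g) → R) : symp y x = - symp x y := by
  unfold symp
  rw [← Finset.sum_neg_distrib]
  exact Finset.sum_congr rfl fun i _ => by ring

theorem symp_add_right (a x y : Fin (2 * g) → R) :
    symp a (x + y) = symp a x + symp a y := by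
  unfold symp
  rw [← Finset.sum_add_distrib]
  exact Finset.sum_congr rfl fun i _ => by simp only [Pi.add_apply]; ring

theorem symp_smul_right (c : R) (a x : Fin (2 * g) → R) :
    symp a (c • x) = c * symp a x := by
  unfold symp
  rw [Finset.mul_sum]
  exact Finset.sum_congr rfl fun i _ => by simp only [Pi.smul_apply, smul_eq_mul]; ring

theorem symp_zero_right (a : Fin (2 * g) → R) :
    symp a (0 : Fin (2 * g) → R) = 0 := by
  unfold symp; simp

theorem symp_neg_left (x a : Fin (2 * g) → R) : symp (-x) a = - symp x a := by
  unfold symp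
  rw [← Finset.sum_neg_distrib]
  exact Finset.sum_congr rfl fun i _ => by simp only [Pi.neg_apply]; ring

theorem symp_neg_right (a x : Fin (2 * g) → R) : symp a (-x) = - symp a x := by
  unfold symp
  rw [← Finset.sum_neg_distrib]
  exact Finset.sum_congr rfl fun i _ => by simp only [Pi.neg_apply]; ring

theorem symp_self (x : Fin (2 * g) → R) : symp x x = 0 :=
  Finset.sum_eq_zero fun i _ => by ring

/-- `symp` as a linear map in the left argument. -/
def sympL (d : Fin (2 * g) → R) : (Fin (2 * g) → R) →ₗ[R] R where
  toFun v := symp v d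
  map_add' x y := symp_add_left x y d
  map_smul' c x := symp_smul_left c x d

@[simp] theorem sympL_apply (d v : Fin (2 * g) → R) : sympL d v = symp v d := rfl

/-- `symp` as a linear map in the right argument. -/
def sympR (d : Fin (2 * g) → R) : (Fin (2 * g) → R) →ₗ[R] R where
  toFun v := symp d v
  map_add' x y := symp_add_right d x y
  map_smul' c x := symp_smul_right c d x

@[simp] theorem sympR_apply (d v : Fin (2 * g) → R) : sympR d v = symp d v := rfl

theorem symp_map {S : Type*} [CommRing S] (f : R →+* S) (x y : Fin (2 * g) → R) :
    symp (fun j => f (x j)) (fun j => f (y j)) = f (symp x y) := by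
  unfold symp
  rw [map_sum]
  exact Finset.sum_congr rfl fun i _ => by simp

@[simp] theorem pr2_lt {n : ℕ} (v : Fin n → R) (j : Fin n) (h : (j:ℕ) < 2) :
    pr2 v j = 0 := if_pos h

theorem pr2_ge {n : ℕ} (v : Fin n → R) (j : Fin n) (h : ¬ (j:ℕ) < 2) :
    pr2 v j = v j := if_neg h

/-- Splitting off the first hyperbolic coordinate pair. -/
theorem symp_split (x y : Fin (2 * (g + 1)) → R) :
    symp x y = x ⟨0, by linarith⟩ * y ⟨1, by linarith⟩ - x ⟨1, by linarith⟩ * y ⟨0, by linarith⟩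
      + symp (pr2 x) (pr2 y) := by
  unfold symp
  rw [Fin.sum_univ_succ, Fin.sum_univ_succ]
  have i0 : (⟨2 * ((0 : Fin (g+1))).1, by omega⟩ : Fin (2*(g+1))) = ⟨0, by omega⟩ := by
    apply Fin.ext; simp
  have i1 : (⟨2 * ((0 : Fin (g+1))).1 + 1, by omega⟩ : Fin (2*(g+1))) = ⟨1, by omega⟩ := by
    apply Fin.ext; simp
  rw [i0, i1, pr2_lt x _ (by norm_num), pr2_lt x _ (by norm_num),
    pr2_lt y _ (by norm_num), pr2_lt y _ (by norm_num)]
  simp only [zero_mul, mul_zero, sub_zero, zero_sub, neg_zero, zero_add]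
  congr 1

theorem pr2_pr2 {n : ℕ} (v : Fin n → R) : pr2 (pr2 v) = pr2 v := by
  funext j; by_cases h : (j:ℕ) < 2
  · rw [pr2_lt _ _ h, pr2_lt _ _ h]
  · rw [pr2_ge _ _ h, pr2_ge _ _ h]

theorem pr2_eq_self {n : ℕ} {v : Fin n → R} (h : ∀ j : Fin n, (j:ℕ) < 2 → v j = 0) :
    pr2 v = v := by
  funext j; by_cases hj : (j:ℕ) < 2
  · rw [pr2_lt _ _ hj, h j hj]
  · rw [pr2_ge _ _ hj]

theorem pr2_add {n : ℕ} (v u : Fin n → R) : pr2 (v + u) = pr2 v + pr2 u := by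
  funext j; by_cases h : (j:ℕ) < 2 <;>
    simp [pr2_lt, pr2_ge, h, Pi.add_apply, pr2]

/-- If the first two coordinates of `z` vanish, `symp z v` only sees `pr2 v`. -/
theorem symp_pr2_right {z v : Fin (2 * (g+1)) → R}
    (h0 : z ⟨0, by linarith⟩ = 0) (h1 : z ⟨1, by linarith⟩ = 0) :
    symp z v = symp z (pr2 v) := by
  rw [symp_split z v, symp_split z (pr2 v), h0, h1, pr2_pr2,
    pr2_lt v _ (by norm_num), pr2_lt v _ (by norm_num)]
  ring

theorem symp_pr2_left {z v : Fin (2 * (g+1)) → R}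
    (h0 : z ⟨0, by linarith⟩ = 0) (h1 : z ⟨1, by linarith⟩ = 0) :
    symp v z = symp (pr2 v) z := by
  rw [symp_swap z v, symp_pr2_right h0 h1, symp_swap (pr2 v) z, neg_neg]

/-- Pairing with the standard vector `b_1` reads off the `a_1`-coordinate. -/
theorem symp_stdB (v : Fin (2 * (g+1)) → R) :
    symp v (stdB R (g+1) 0) = v ⟨0, by linarith⟩ := by
  have h0 : stdB R (g+1) 0 ⟨0, by omega⟩ = 0 := by simp [stdB]
  have h1 : stdB R (g+1) 0 ⟨1, by omega⟩ = 1 := by simp [stdB]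
  have h2 : pr2 (stdB R (g+1) 0) = 0 := by
    funext j; by_cases h : (j:ℕ) < 2
    · simp [pr2_lt _ _ h]
    · rw [pr2_ge _ _ h]; simp [stdB]; omega
  rw [symp_split, h0, h1, h2, symp_zero_right]; ring

theorem symp_stdA (v : Fin (2 * (g+1)) → R) :
    symp v (stdA R (g+1) 0) = - v ⟨1, by linarith⟩ := by
  have h0 : stdA R (g+1) 0 ⟨0, by omega⟩ = 1 := by simp [stdA]
  have h1 : stdA R (g+1) 0 ⟨1, by omega⟩ = 0 := by simp [stdA]
  have h2 : pr2 (stdA R (g+1) 0) = 0 := by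
    funext j; by_cases h : (j:ℕ) < 2
    · simp [pr2_lt _ _ h]
    · rw [pr2_ge _ _ h]; simp only [stdA, Pi.zero_apply]; rw [if_neg (by omega)]
  rw [symp_split, h0, h1, h2, symp_zero_right]; ring

theorem sum_range_pairs {M : Type*} [AddCommMonoid M] (N : ℕ) (h : ℕ → M) :
    ∑ j ∈ Finset.range (2*N), h j = ∑ i ∈ Finset.range N, (h (2*i) + h (2*i+1)) := by
  induction N with
  | zero => simp
  | succ N ih =>
    have e : 2 * (N+1) = (2*N + 1) + 1 := by omega
    rw [e, Finset.sum_range_succ, Finset.sum_range_succ, Finset.sum_range_succ, ih]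
    rw [add_assoc]

theorem sum_univ_pairs {M : Type*} [AddCommMonoid M] {N : ℕ} (h : Fin (2*N) → M) :
    ∑ j, h j = ∑ i : Fin N, (h ⟨2*i.1, by omega⟩ + h ⟨2*i.1+1, by omega⟩) := by
  classical
  let H : ℕ → M := fun k => if hk : k < 2*N then h ⟨k, hk⟩ else 0
  have e1 : ∑ j, h j = ∑ k ∈ Finset.range (2*N), H k := by
    rw [← Fin.sum_univ_eq_sum_range]
    exact Finset.sum_congr rfl fun j _ => by simp [H]
  have e2 : ∑ i : Fin N, (h ⟨2*i.1, by omega⟩ + h ⟨2*i.1+1, by omega⟩)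
      = ∑ k ∈ Finset.range N, (H (2*k) + H (2*k+1)) := by
    rw [← Fin.sum_univ_eq_sum_range]
    refine Finset.sum_congr rfl fun i _ => ?_
    have p1 : 2*i.1 < 2*N := by omega
    have p2 : 2*i.1+1 < 2*N := by omega
    simp only [H, dif_pos p1, dif_pos p2]
  rw [e1, e2, sum_range_pairs]

/-- The vector representing a linear functional (with coefficients `c`) via `symp`. -/
def Jvec (c : Fin (2*g) → R) : Fin (2*g) → R := fun j =>
  if h : j.1 % 2 = 0 then c ⟨j.1+1, by omega⟩ else - c ⟨j.1 - 1, by omega⟩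

theorem symp_Jvec (c x : Fin (2*g) → R) :
    symp (Jvec c) x = ∑ j, c j * x j := by
  rw [sum_univ_pairs (fun j => c j * x j)]
  unfold symp
  refine Finset.sum_congr rfl fun i _ => ?_
  have h0 : (2*i.1) % 2 = 0 := by omega
  have h1 : ¬ ((2*i.1+1) % 2 = 0) := by omega
  have j0 : Jvec c ⟨2*i.1, by omega⟩ = c ⟨2*i.1+1, by omega⟩ := by
    unfold Jvec; rw [dif_pos h0]
  have j1 : Jvec c ⟨2*i.1+1, by omega⟩ = - c ⟨2*i.1, by omega⟩ := by
    unfold Jvec; rw [dif_neg h1]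
    congr 1
    all_goals exact Fin.ext (by omega)
  rw [j0, j1]
  all_goals ring

theorem exists_dual_of_compl {R : Type*} [CommRing R] {M : Type*} [AddCommGroup M] [Module R M]
    {ι : Type*} [Fintype ι] [DecidableEq ι] {v : ι → M}
    (li : LinearIndependent R v) {C : Submodule R M}
    (hC : IsCompl (Submodule.span R (Set.range v)) C) :
    ∃ φ : ι → (M →ₗ[R] R), ∀ k l, φ k (v l) = if k = l then 1 else 0 := by
  classical
  set p := Submodule.span R (Set.range v) with hp
  let B := Module.Basis.span li
  let pr := p.projectionOnto C hC
  refine ⟨fun k => (B.coord k).comp pr, fun k l => ?_⟩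
  have hv : v l ∈ p := Submodule.subset_span (Set.mem_range_self l)
  have h1 : pr (v l) = B l := by
    have h2 : pr ((⟨v l, hv⟩ : p) : M) = ⟨v l, hv⟩ :=
      Submodule.projectionOnto_apply_left hC ⟨v l, hv⟩
    rw [show (((⟨v l, hv⟩ : p) : M)) = v l from rfl] at h2
    rw [h2]
    exact (Module.Basis.span_apply li l).symm
  simp only [LinearMap.comp_apply, h1, Module.Basis.coord_apply, Module.Basis.repr_self]
  rw [Finsupp.single_apply]
  by_cases h : k = l
  · simp [h]
  · rw [if_neg (Ne.symm h), if_neg h]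

theorem dualFam_isUnimodular {n m : ℕ} {v : Fin m → Fin n → ℤ}
    (φ : Fin m → ((Fin n → ℤ) →ₗ[ℤ] ℤ))
    (hφ : ∀ k l, φ k (v l) = if k = l then 1 else 0) :
    IsUnimodular v := by
  classical
  have li : LinearIndependent ℤ v := by
    rw [linearIndependent_iff']
    intro s c hc i hi
    have h := congrArg (φ i) hc
    rw [map_sum, map_zero] at h
    simp only [map_smul, hφ, smul_eq_mul, mul_ite, mul_one, mul_zero] at h
    rwa [Finset.sum_ite_eq s i c, if_pos hi] at h
  refine ⟨li, ⨅ k, LinearMap.ker (φ k), ?_⟩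
  constructor
  · rw [Submodule.disjoint_def]
    intro x hx hx2
    obtain ⟨c, hc⟩ := (Submodule.mem_span_range_iff_exists_fun ℤ).mp hx
    have hck : ∀ k, c k = 0 := by
      intro k
      have h := congrArg (φ k) hc
      rw [map_sum] at h
      simp only [map_smul, hφ, smul_eq_mul, mul_ite, mul_one, mul_zero] at h
      rw [Finset.sum_ite_eq Finset.univ k c, if_pos (Finset.mem_univ k)] at h
      rw [h]
      exact (Submodule.mem_iInf _).mp hx2 k
    rw [← hc]
    simp [hck]
  · rw [codisjoint_iff_le_sup]
    intro x _
    have hmem : x - ∑ k, φ k x • v k ∈ ⨅ k, LinearMap.ker (φ k) := by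
      rw [Submodule.mem_iInf]
      intro k
      rw [LinearMap.mem_ker, map_sub, map_sum]
      simp only [map_smul, hφ, smul_eq_mul, mul_ite, mul_one, mul_zero]
      rw [Finset.sum_ite_eq Finset.univ k, if_pos (Finset.mem_univ k), sub_self]
    have hx1 : (∑ k, φ k x • v k) ∈ Submodule.span ℤ (Set.range v) :=
      Submodule.sum_mem _ fun k _ =>
        Submodule.smul_mem _ _ (Submodule.subset_span (Set.mem_range_self k))
    have hfin := Submodule.add_mem_sup hx1 hmem
    simpa using hfin

theorem symp_intCast {S : Type*} [CommRing S] {g : ℕ} (x y : Fin (2*g) → ℤ) :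
    symp (fun j => ((x j : S))) (fun j => ((y j : S))) = ((symp x y : ℤ) : S) := by
  have h := symp_map (Int.castRingHom S) x y
  simpa using h

theorem finrank_inf_ker {F : Type*} [Field F] {V : Type*} [AddCommGroup V] [Module F V]
    [FiniteDimensional F V] (p : Submodule F V) (φ : V →ₗ[F] F) :
    Module.finrank F p ≤ Module.finrank F ↥(p ⊓ LinearMap.ker φ) + 1 := by
  have h := LinearMap.finrank_range_add_finrank_ker (φ.domRestrict p)
  have h1 : Module.finrank F ↥(LinearMap.range (φ.domRestrict p)) ≤ 1 := by
    have := Submodule.finrank_le (LinearMap.range (φ.domRestrict p))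
    simpa [Module.finrank_self] using this
  have h2 : Module.finrank F ↥(LinearMap.ker (φ.domRestrict p))
      = Module.finrank F ↥(p ⊓ LinearMap.ker φ) := by
    rw [LinearMap.ker_domRestrict]
    have e : Submodule.comap p.subtype (LinearMap.ker φ)
        = Submodule.comap p.subtype (p ⊓ LinearMap.ker φ) := by
      ext x
      simp only [Submodule.mem_comap, Submodule.mem_inf]
      exact ⟨fun hh => ⟨x.2, hh⟩, fun hh => hh.2⟩
    rw [e]
    exact (Submodule.comapSubtypeEquivOfLe inf_le_left).finrank_eq
  omega

theorem finrank_iInf_ker_ge {F : Type*} [Field F] {V : Type*} [AddCommGroup V] [Module F V]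
    [FiniteDimensional F V] {ι : Type*} [Fintype ι] [DecidableEq ι] (ψ : ι → (V →ₗ[F] F)) :
    Module.finrank F V ≤ Module.finrank F ↥(⨅ j, LinearMap.ker (ψ j)) + Fintype.card ι := by
  classical
  have main : ∀ s : Finset ι,
      Module.finrank F V ≤ Module.finrank F ↥(s.inf fun j => LinearMap.ker (ψ j)) + s.card := by
    intro s
    induction s using Finset.induction_on with
    | empty => rw [Finset.inf_empty, finrank_top]; simp
    | @insert a s ha ih =>
      rw [Finset.inf_insert, Finset.card_insert_of_notMem ha]
      have h1 := finrank_inf_ker (s.inf fun j => LinearMap.ker (ψ j)) (ψ a)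
      have h2 : LinearMap.ker (ψ a) ⊓ (s.inf fun j => LinearMap.ker (ψ j))
          = (s.inf fun j => LinearMap.ker (ψ j)) ⊓ LinearMap.ker (ψ a) := inf_comm _ _
      rw [h2]
      omega
  have huniv := main Finset.univ
  have he : (Finset.univ.inf fun j => LinearMap.ker (ψ j)) = ⨅ j, LinearMap.ker (ψ j) := by
    apply le_antisymm
    · exact le_iInf fun j => Finset.inf_le (Finset.mem_univ j)
    · exact Finset.le_inf fun j _ => iInf_le _ j
  rw [he] at huniv
  simpa [Finset.card_univ] using huniv

theorem ratClear {nn : ℕ} (x : Fin nn → ℚ) :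
    ∃ (v : Fin nn → ℤ) (c : ℚ), c ≠ 0 ∧ (fun j => ((v j : ℚ))) = c • x := by
  classical
  set P : ℕ := ∏ j', (x j').den with hP
  have hPne : P ≠ 0 := Finset.prod_ne_zero_iff.mpr fun j _ => (x j).den_nz
  refine ⟨fun j => ((P / (x j).den : ℕ) : ℤ) * (x j).num, (P : ℚ),
    by exact_mod_cast hPne, funext fun j => ?_⟩
  have hdvd : (x j).den ∣ P := Finset.dvd_prod_of_mem _ (Finset.mem_univ j)
  have hden : ((x j).den : ℚ) ≠ 0 := by exact_mod_cast (x j).den_nz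
  have hnum : x j * ((x j).den : ℚ) = ((x j).num : ℚ) := Rat.mul_den_eq_num (x j)
  have hPd : ((P / (x j).den : ℕ) : ℚ) * ((x j).den : ℚ) = (P : ℚ) := by
    rw [← Nat.cast_mul, Nat.div_mul_cancel hdvd]
  simp only [Pi.smul_apply, smul_eq_mul]
  push_cast
  rw [← hnum]
  calc ((P / (x j).den : ℕ) : ℚ) * (x j * ((x j).den : ℚ))
      = (((P / (x j).den : ℕ) : ℚ) * ((x j).den : ℚ)) * x j := by ring
    _ = (P : ℚ) * x j := by rw [hPd]

set_option maxHeartbeats 1000000 in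
theorem exists_sympOne {N : ℕ} {ι τ : Type} [Fintype ι] [DecidableEq ι] [Fintype τ] [DecidableEq τ]
    (D : ι → Fin (2*N) → ℤ) (FR FR' : τ → Fin (2*N) → ℤ)
    (hFR : ∀ t, ∃ j, D j = FR t ∨ D j = - FR t)
    (hFR' : ∀ t, ∃ j, D j = FR' t ∨ D j = - FR' t)
    (hpair : ∀ t t', symp (FR' t) (FR t') = if t = t' then 1 else 0)
    (harith : 2 * Fintype.card ι < 2 * N + Fintype.card τ) :
    ∃ p p' : Fin (2*N) → ℤ,
      (∀ j, symp p (D j) = 0) ∧ (∀ j, symp p' (D j) = 0) ∧ symp p p' = 1 := by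
  classical
  set K : Submodule ℤ (Fin (2*N) → ℤ) := ⨅ j, LinearMap.ker (sympL (D j)) with hKdef
  have hK : ∀ v, v ∈ K ↔ ∀ j, symp v (D j) = 0 := by
    intro v
    simp [hKdef, Submodule.mem_iInf, LinearMap.mem_ker]
  have hKF : ∀ v ∈ K, ∀ t, symp v (FR t) = 0 := by
    intro v hv t
    obtain ⟨j, hj | hj⟩ := hFR t
    · rw [← hj]; exact (hK v).mp hv j
    · have h0 := (hK v).mp hv j
      rw [hj, symp_neg_right] at h0
      exact neg_eq_zero.mp h0
  have hKF' : ∀ v ∈ K, ∀ t, symp v (FR' t) = 0 := by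
    intro v hv t
    obtain ⟨j, hj | hj⟩ := hFR' t
    · rw [← hj]; exact (hK v).mp hv j
    · have h0 := (hK v).mp hv j
      rw [hj, symp_neg_right] at h0
      exact neg_eq_zero.mp h0
  -- Step A: K contains at least 2N - card ι independent vectors
  set qc : (Fin (2*N) → ℤ) → (Fin (2*N) → ℚ) := fun d => (fun jj => ((d jj : ℚ))) with hqc
  set Kq : Submodule ℚ (Fin (2*N) → ℚ) := ⨅ j, LinearMap.ker (sympL (qc (D j))) with hKq
  have hdimq : 2*N ≤ Module.finrank ℚ ↥Kq + Fintype.card ι := by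
    have h := finrank_iInf_ker_ge (fun j : ι => sympL (qc (D j)))
    rwa [Module.finrank_fintype_fun_eq_card, Fintype.card_fin] at h
  set r₀ := Module.finrank ℚ ↥Kq with hr₀
  let Bq : Module.Basis (Fin r₀) ℚ ↥Kq := Module.finBasis ℚ ↥Kq
  have hvecs : ∀ i : Fin r₀, ∃ v : Fin (2*N) → ℤ, v ∈ K ∧
      ∃ c : ℚ, c ≠ 0 ∧ qc v = c • ((Bq i : Fin (2*N) → ℚ)) := by
    intro i
    obtain ⟨v, c, hc, hvc⟩ := ratClear ((Bq i : Fin (2*N) → ℚ))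
    refine ⟨v, ?_, c, hc, hvc⟩
    rw [hK]
    intro j
    have hmem : ((Bq i : Fin (2*N) → ℚ)) ∈ Kq := (Bq i).2
    have h2 : symp ((Bq i : Fin (2*N) → ℚ)) (qc (D j)) = 0 := by
      have h3 := (Submodule.mem_iInf _).mp hmem j
      simpa using h3
    have h1 : symp (fun jj => ((v jj : ℚ))) (qc (D j)) = 0 := by
      rw [hvc, symp_smul_left, h2, mul_zero]
    have h4 : ((symp v (D j) : ℤ) : ℚ) = 0 := by
      rw [← symp_intCast]
      exact h1
    exact_mod_cast h4
  choose vv hvvK cc hcc hvc using hvecs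
  let qcL : (Fin (2*N) → ℤ) →ₗ[ℤ] (Fin (2*N) → ℚ) :=
    { toFun := qc
      map_add' := by intro a b; funext jj; simp [hqc]
      map_smul' := by intro m a; funext jj; simp [hqc] }
  have liBv : LinearIndependent ℚ (fun i : Fin r₀ => ((Bq i : Fin (2*N) → ℚ))) :=
    Bq.linearIndependent.map' Kq.subtype (Submodule.ker_subtype Kq)
  have liQ : LinearIndependent ℚ (fun i => qc (vv i)) := by
    have h := liBv.units_smul (fun i => Units.mk0 (cc i) (hcc i))
    have he : (fun i => qc (vv i))
        = (fun i => Units.mk0 (cc i) (hcc i)) • (fun i : Fin r₀ => ((Bq i : Fin (2*N) → ℚ))) := by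
      funext i
      rw [hvc i]
      rfl
    rw [he]
    exact h
  have liZq : LinearIndependent ℤ (fun i => qc (vv i)) := by
    refine liQ.restrict_scalars ?_
    intro a b hab
    have : ((a : ℤ) : ℚ) = ((b : ℤ) : ℚ) := by simpa [zsmul_eq_mul] using hab
    exact_mod_cast this
  have liZ : LinearIndependent ℤ vv :=
    LinearIndependent.of_comp qcL (by exact liZq)
  have hrankK : r₀ ≤ Module.finrank ℤ ↥K := by
    have li2 : LinearIndependent ℤ (fun i : Fin r₀ => (⟨vv i, hvvK i⟩ : K)) := by
      apply LinearIndependent.of_comp K.subtype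
      exact liZ
    have h := li2.fintype_card_le_finrank
    simpa using h
  -- Step B: no prime divides all values of symp on K
  have key : ∀ q : ℕ, Nat.Prime q → ¬ (∀ k, k ∈ K → ∀ k', k' ∈ K → (q:ℤ) ∣ symp k k') := by
    intro q hq hdvd
    haveI : Fact (Nat.Prime q) := ⟨hq⟩
    let κb := Module.Free.chooseBasis ℤ ↥K
    set χ := Module.Free.ChooseBasisIndex ℤ ↥K with hχ
    let mc : (Fin (2*N) → ℤ) → (Fin (2*N) → ZMod q) := fun v jj => ((v jj : ZMod q))
    have mcsymp : ∀ a b : Fin (2*N) → ℤ, symp (mc a) (mc b) = ((symp a b : ℤ) : ZMod q) :=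
      fun a b => symp_intCast a b
    let κ : χ → Fin (2*N) → ZMod q := fun i => mc ((κb i : Fin (2*N) → ℤ))
    have hκκ : ∀ i i', symp (κ i) (κ i') = 0 := by
      intro i i'
      rw [show κ i = mc ((κb i : Fin (2*N) → ℤ)) from rfl,
        show κ i' = mc ((κb i' : Fin (2*N) → ℤ)) from rfl, mcsymp]
      exact (ZMod.intCast_zmod_eq_zero_iff_dvd _ q).mpr (hdvd _ (κb i).2 _ (κb i').2)
    let FQ : τ → Fin (2*N) → ZMod q := fun t => mc (FR t)
    let FQ' : τ → Fin (2*N) → ZMod q := fun t => mc (FR' t)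
    have hκF : ∀ i t, symp (κ i) (FQ t) = 0 := by
      intro i t
      rw [show κ i = mc ((κb i : Fin (2*N) → ℤ)) from rfl, show FQ t = mc (FR t) from rfl, mcsymp,
        hKF _ (κb i).2 t]
      simp
    have hκF' : ∀ i t, symp (κ i) (FQ' t) = 0 := by
      intro i t
      rw [show κ i = mc ((κb i : Fin (2*N) → ℤ)) from rfl, show FQ' t = mc (FR' t) from rfl, mcsymp,
        hKF' _ (κb i).2 t]
      simp
    have hF'κ : ∀ t i, symp (FQ' t) (κ i) = 0 := by
      intro t i
      rw [symp_swap (κ i) (FQ' t), hκF', neg_zero]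
    have hpairq : ∀ t t', symp (FQ' t) (FQ t') = if t = t' then (1 : ZMod q) else 0 := by
      intro t t'
      rw [show FQ' t = mc (FR' t) from rfl, show FQ t' = mc (FR t') from rfl, mcsymp, hpair t t']
      split <;> simp
    -- independence of κ mod q
    have liκ : LinearIndependent (ZMod q) κ := by
      rw [Fintype.linearIndependent_iff]
      intro f hf
      let c : χ → ℤ := fun i => ((f i).val : ℤ)
      have hfc : ∀ i, ((c i : ℤ) : ZMod q) = f i := by
        intro i
        show (((((f i).val : ℕ)) : ℤ) : ZMod q) = f i
        push_cast
        rw [ZMod.natCast_val, ZMod.cast_id]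
      set X : Fin (2*N) → ℤ := ∑ i, c i • ((κb i : Fin (2*N) → ℤ)) with hX
      have hXK : X ∈ K := Submodule.sum_mem _ fun i _ => Submodule.smul_mem _ _ (κb i).2
      have hXq : ∀ jj, (q:ℤ) ∣ X jj := by
        intro jj
        have hXcoord : X jj = ∑ i, c i * ((κb i : Fin (2*N) → ℤ)) jj := by
          rw [hX, Finset.sum_apply]
          exact Finset.sum_congr rfl fun i _ => by simp
        have hfjj : ∑ i, f i * κ i jj = 0 := by
          have h9 := congrFun hf jj
          rw [Finset.sum_apply] at h9
          simpa using h9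
        have h1 : ((X jj : ℤ) : ZMod q) = 0 := by
          rw [hXcoord]
          push_cast
          calc (∑ i, ((c i : ℤ) : ZMod q) * ((((κb i : Fin (2*N) → ℤ)) jj : ℤ) : ZMod q))
              = ∑ i, f i * κ i jj := Finset.sum_congr rfl fun i _ => by rw [hfc]
            _ = 0 := hfjj
        exact (ZMod.intCast_zmod_eq_zero_iff_dvd _ q).mp h1
      let u : Fin (2*N) → ℤ := fun jj => X jj / q
      have hqu : X = (q:ℤ) • u := by
        funext jj
        rw [Pi.smul_apply, smul_eq_mul]
        exact (Int.mul_ediv_cancel' (hXq jj)).symm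
      have huK : u ∈ K := by
        rw [hK]
        intro j
        have h3 : (q:ℤ) * symp u (D j) = 0 := by
          rw [← symp_smul_left, ← hqu]
          exact (hK X).mp hXK j
        have hqne : (q:ℤ) ≠ 0 := by exact_mod_cast hq.ne_zero
        exact (mul_eq_zero.mp h3).resolve_left hqne
      have hXel : (⟨X, hXK⟩ : K) = ∑ i, c i • κb i := by
        apply Subtype.ext
        show X = ((∑ i, c i • κb i : ↥K) : Fin (2*N) → ℤ)
        rw [hX]
        simp
      have hXel2 : (⟨X, hXK⟩ : K) = (q:ℤ) • (⟨u, huK⟩ : K) := Subtype.ext (by simpa using hqu)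
      have hrepr : ∀ i₀, c i₀ = (q:ℤ) * (κb.repr ⟨u, huK⟩ i₀) := by
        intro i₀
        have h4 := congrArg (fun z : ↥K => (κb.repr z) i₀) (hXel.symm.trans hXel2)
        simp only [map_sum, map_smul, Module.Basis.repr_self, Finsupp.coe_finset_sum, Finset.sum_apply,
          Finsupp.smul_apply, Finsupp.single_apply, smul_eq_mul, mul_ite, mul_one, mul_zero] at h4
        rwa [Finset.sum_ite_eq' Finset.univ i₀ c, if_pos (Finset.mem_univ i₀)] at h4
      intro i₀
      have h5 : ((c i₀ : ℤ) : ZMod q) = 0 := by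
        rw [hrepr i₀]
        push_cast
        simp [ZMod.natCast_self]
      rw [← hfc i₀]
      exact h5
    -- combined family
    let ξ : (χ ⊕ τ) → Fin (2*N) → ZMod q := Sum.elim κ FQ
    have liξ : LinearIndependent (ZMod q) ξ := by
      rw [Fintype.linearIndependent_iff]
      intro f hf
      have hτ0 : ∀ t, f (Sum.inr t) = 0 := by
        intro t
        have h5 := congrArg (fun v => sympR (FQ' t) v) hf
        simp only [map_zero] at h5
        rw [map_sum] at h5
        have h6 : ∀ l', sympR (FQ' t) (f l' • ξ l') = f l' * symp (FQ' t) (ξ l') := by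
          intro l'
          rw [map_smul]
          simp
        rw [Finset.sum_congr rfl fun l' _ => h6 l'] at h5
        rw [Fintype.sum_sum_type] at h5
        have e1 : ∀ i : χ, f (Sum.inl i) * symp (FQ' t) (ξ (Sum.inl i)) = 0 := fun i => by
          rw [show ξ (Sum.inl i) = κ i from rfl, hF'κ t i, mul_zero]
        have e2 : ∀ t' : τ, f (Sum.inr t') * symp (FQ' t) (ξ (Sum.inr t'))
            = if t = t' then f (Sum.inr t') else 0 := fun t' => by
          rw [show ξ (Sum.inr t') = FQ t' from rfl, hpairq t t']
          split <;> ring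
        rw [Finset.sum_congr rfl (fun i _ => e1 i),
          Finset.sum_congr rfl (fun t' _ => e2 t')] at h5
        rwa [Finset.sum_const_zero, zero_add,
          Finset.sum_ite_eq Finset.univ t (fun t' => f (Sum.inr t')),
          if_pos (Finset.mem_univ t)] at h5
      intro l
      cases l with
      | inr t => exact hτ0 t
      | inl i =>
        have h7 : ∑ i', f (Sum.inl i') • κ i' = 0 := by
          have h8 := hf
          rw [Fintype.sum_sum_type] at h8
          have e3 : ∀ t : τ, f (Sum.inr t) • ξ (Sum.inr t) = 0 := fun t => by
            rw [hτ0 t, zero_smul]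
          rw [Finset.sum_congr rfl (fun t _ => e3 t), Finset.sum_const_zero, add_zero] at h8
          exact h8
        exact (Fintype.linearIndependent_iff.mp liκ) _ h7 i
    obtain ⟨Cξ, hCξ⟩ := Submodule.exists_isCompl (Submodule.span (ZMod q) (Set.range ξ))
    obtain ⟨φξ, hφξ⟩ := exists_dual_of_compl liξ hCξ
    let η : (χ ⊕ τ) → Fin (2*N) → ZMod q :=
      fun l => Jvec (fun jj => φξ l (fun jj' => if jj = jj' then 1 else 0))
    have hη : ∀ l x, symp (η l) x = φξ l x := by
      intro l x
      rw [show η l = Jvec (fun jj => φξ l (fun jj' => if jj = jj' then 1 else 0)) from rfl,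
        symp_Jvec, LinearMap.pi_apply_eq_sum_univ (φξ l) x]
      exact Finset.sum_congr rfl fun jj _ => by rw [smul_eq_mul, mul_comm]
    let Ψ : (Fin (2*N) → ZMod q) →ₗ[ZMod q] ((χ → ZMod q) × (τ → ZMod q)) :=
      LinearMap.prod (LinearMap.pi fun i => sympL (κ i)) (LinearMap.pi fun t => sympL (FQ t))
    have hΨapp : ∀ v, Ψ v = (fun i => symp v (κ i), fun t => symp v (FQ t)) := fun v => rfl
    have hΨsurj : Function.Surjective Ψ := by
      intro cb
      set v : Fin (2*N) → ZMod q :=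
        (∑ i, cb.1 i • η (Sum.inl i)) + ∑ t, cb.2 t • η (Sum.inr t) with hv
      have hval : ∀ x, symp v x
          = (∑ i, cb.1 i * φξ (Sum.inl i) x) + ∑ t, cb.2 t * φξ (Sum.inr t) x := by
        intro x
        rw [hv, symp_add_left]
        congr 1
        · rw [show symp (∑ i, cb.1 i • η (Sum.inl i)) x
            = sympL x (∑ i, cb.1 i • η (Sum.inl i)) from rfl, map_sum]
          exact Finset.sum_congr rfl fun i _ => by rw [map_smul]; simp [hη]
        · rw [show symp (∑ t, cb.2 t • η (Sum.inr t)) x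
            = sympL x (∑ t, cb.2 t • η (Sum.inr t)) from rfl, map_sum]
          exact Finset.sum_congr rfl fun t _ => by rw [map_smul]; simp [hη]
      refine ⟨v, ?_⟩
      rw [hΨapp]
      have hc1 : (fun i => symp v (κ i)) = cb.1 := by
        funext i₀
        rw [hval (κ i₀)]
        rw [show (κ i₀) = ξ (Sum.inl i₀) from rfl]
        simp only [hφξ]
        simp only [Sum.inl.injEq, Sum.inr.injEq, reduceCtorEq, if_false, mul_ite, mul_one, mul_zero]
        rw [Finset.sum_ite_eq' Finset.univ i₀ cb.1, if_pos (Finset.mem_univ i₀)]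
        simp
      have hc2 : (fun t => symp v (FQ t)) = cb.2 := by
        funext t₀
        rw [hval (FQ t₀)]
        rw [show (FQ t₀) = ξ (Sum.inr t₀) from rfl]
        simp only [hφξ]
        simp only [Sum.inl.injEq, Sum.inr.injEq, reduceCtorEq, if_false, mul_ite, mul_one, mul_zero]
        rw [Finset.sum_ite_eq' Finset.univ t₀ cb.2, if_pos (Finset.mem_univ t₀)]
        simp
      rw [hc1, hc2]
    have hrn := LinearMap.finrank_range_add_finrank_ker Ψ
    have hrange : Module.finrank (ZMod q) ↥(LinearMap.range Ψ)
        = Fintype.card χ + Fintype.card τ := by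
      rw [LinearMap.range_eq_top.mpr hΨsurj, finrank_top]
      simp [Module.finrank_prod, Module.finrank_fintype_fun_eq_card]
    have hUker : Submodule.span (ZMod q) (Set.range κ) ≤ LinearMap.ker Ψ := by
      rw [Submodule.span_le]
      rintro _ ⟨i, rfl⟩
      rw [SetLike.mem_coe, LinearMap.mem_ker, hΨapp]
      have hz1 : (fun i' => symp (κ i) (κ i')) = (0 : χ → ZMod q) := funext fun i' => hκκ i i'
      have hz2 : (fun t => symp (κ i) (FQ t)) = (0 : τ → ZMod q) := funext fun t => hκF i t
      rw [hz1, hz2]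
      rfl
    have hUdim : Fintype.card χ ≤ Module.finrank (ZMod q) ↥(LinearMap.ker Ψ) := by
      have h8 : Module.finrank (ZMod q) ↥(Submodule.span (ZMod q) (Set.range κ))
          = Fintype.card χ := finrank_span_eq_card liκ
      rw [← h8]
      exact Submodule.finrank_mono hUker
    have hcardχ : Module.finrank ℤ ↥K = Fintype.card χ :=
      Module.finrank_eq_card_chooseBasisIndex ℤ ↥K
    have hdomain : Module.finrank (ZMod q) (Fin (2*N) → ZMod q) = 2*N := by
      rw [Module.finrank_fintype_fun_eq_card, Fintype.card_fin]
    rw [hdomain, hrange] at hrn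
    omega
  -- Step C: the minimal positive value of symp on K is 1
  have hne : ∃ k, k ∈ K ∧ ∃ k', k' ∈ K ∧ symp k k' ≠ 0 := by
    by_contra hcon
    push_neg at hcon
    exact key 2 Nat.prime_two (fun k hk k' hk' => by rw [hcon k hk k' hk']; exact dvd_zero _)
  obtain ⟨k₀, hk₀, k₀', hk₀', hval0⟩ := hne
  have hbddP : ∃ z : ℤ, 0 < z ∧ ∃ k, k ∈ K ∧ ∃ k', k' ∈ K ∧ symp k k' = z := by
    rcases lt_or_gt_of_ne hval0 with h | h
    · exact ⟨- symp k₀ k₀', by omega, k₀', hk₀', k₀, hk₀, by rw [symp_swap]⟩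
    · exact ⟨symp k₀ k₀', h, k₀, hk₀, k₀', hk₀', rfl⟩
  obtain ⟨d, ⟨hdpos, y, hy, z, hz, hyz⟩, hmin⟩ :=
    Int.exists_least_of_bdd (P := fun m => 0 < m ∧ ∃ k, k ∈ K ∧ ∃ k', k' ∈ K ∧ symp k k' = m)
      ⟨1, fun m hm => by omega⟩ hbddP
  have c1 : ∀ k ∈ K, d ∣ symp y k := by
    intro k hk
    set e := symp y k with he
    set G : ℤ := (Int.gcd d e : ℤ) with hG
    have hGpos : 0 < G := by
      have hd0 : d ≠ 0 := by omega
      have hp : 0 < Int.gcd d e := Int.gcd_pos_iff.mpr (Or.inl hd0)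
      rw [hG]
      exact_mod_cast hp
    have hGrep : symp y (Int.gcdA d e • z + Int.gcdB d e • k) = G := by
      rw [symp_add_right, symp_smul_right, symp_smul_right, hyz, hG, Int.gcd_eq_gcd_ab d e]
      ring
    have hGmem : (Int.gcdA d e • z + Int.gcdB d e • k) ∈ K :=
      K.add_mem (K.smul_mem _ hz) (K.smul_mem _ hk)
    have hdG : d ≤ G := hmin G ⟨hGpos, y, hy, _, hGmem, hGrep⟩
    have hGd : G ∣ d := Int.gcd_dvd_left d e
    have hEq : G = d := le_antisymm (Int.le_of_dvd hdpos hGd) hdG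
    have : G ∣ e := Int.gcd_dvd_right d e
    rwa [hEq] at this
  have c2 : ∀ k ∈ K, d ∣ symp k z := by
    intro k hk
    set e := symp k z with he
    set G : ℤ := (Int.gcd d e : ℤ) with hG
    have hGpos : 0 < G := by
      have hd0 : d ≠ 0 := by omega
      have hp : 0 < Int.gcd d e := Int.gcd_pos_iff.mpr (Or.inl hd0)
      rw [hG]
      exact_mod_cast hp
    have hGrep : symp (Int.gcdA d e • y + Int.gcdB d e • k) z = G := by
      rw [symp_add_left, symp_smul_left, symp_smul_left, hyz, hG, Int.gcd_eq_gcd_ab d e]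
      ring
    have hGmem : (Int.gcdA d e • y + Int.gcdB d e • k) ∈ K :=
      K.add_mem (K.smul_mem _ hy) (K.smul_mem _ hk)
    have hdG : d ≤ G := hmin G ⟨hGpos, _, hGmem, z, hz, hGrep⟩
    have hGd : G ∣ d := Int.gcd_dvd_left d e
    have hEq : G = d := le_antisymm (Int.le_of_dvd hdpos hGd) hdG
    have : G ∣ e := Int.gcd_dvd_right d e
    rwa [hEq] at this
  have c3 : ∀ v ∈ K, ∀ k ∈ K, d ∣ symp v k := by
    intro v hv k hk
    obtain ⟨α, hα⟩ := c2 v hv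
    obtain ⟨β, hβ⟩ := c1 k hk
    by_contra hnd
    set e := symp v k with he
    have hval2 : ∀ uu : ℤ, ∃ kk, kk ∈ K ∧ ∃ kk', kk' ∈ K ∧ symp kk kk' = e + d * uu := by
      intro uu
      refine ⟨v + (1 - α) • y, K.add_mem hv (K.smul_mem _ hy),
        k + (uu - (1 - α) * β) • z, K.add_mem hk (K.smul_mem _ hz), ?_⟩
      rw [symp_add_left, symp_add_right, symp_add_right, symp_smul_left, symp_smul_left,
        symp_smul_right, symp_smul_right, hyz, hα, hβ, ← he]
      ring
    obtain ⟨kk, hkk, kk', hkk', hkval⟩ := hval2 (-(e / d))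
    have hemod : symp kk kk' = e % d := by
      rw [hkval, Int.emod_def]
      ring
    have hpos : 0 < e % d := by
      have h1 : 0 ≤ e % d := Int.emod_nonneg e (by omega)
      have h2 : e % d ≠ 0 := fun hcon => hnd (Int.dvd_of_emod_eq_zero hcon)
      omega
    have hlt : e % d < d := Int.emod_lt_of_pos e hdpos
    have := hmin (e % d) ⟨hpos, kk, hkk, kk', hkk', hemod⟩
    omega
  have hd1 : d = 1 := by
    by_contra hne1
    have hnat : d.natAbs ≠ 1 := by omega
    obtain ⟨qq, hqp, hqd⟩ := Nat.exists_prime_and_dvd hnat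
    refine key qq hqp (fun k hk k' hk' => ?_)
    have h1 : (qq : ℤ) ∣ d :=
      dvd_trans (Int.natCast_dvd_natCast.mpr hqd) (Int.natAbs_dvd.mpr dvd_rfl)
    exact dvd_trans h1 (c3 k hk k' hk')
  exact ⟨y, z, (hK y).mp hy, (hK z).mp hz, by rw [hyz, hd1]⟩

set_option maxHeartbeats 1000000 in
theorem exists_yz (g s : ℕ) (w : Fin (s+1) → Fin (2*(g+1)) → ℤ)
    (t : ℕ) (ht : s + 1 + t ≤ g) :
    ∃ y z : Fin t → Fin (2*(g+1)) → ℤ,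
      (∀ j, y j ⟨0, by linarith⟩ = 0 ∧ y j ⟨1, by linarith⟩ = 0 ∧
        z j ⟨0, by linarith⟩ = 0 ∧ z j ⟨1, by linarith⟩ = 0) ∧
      (∀ j i, symp (y j) (pr2 (w i)) = 0) ∧
      (∀ j i, symp (z j) (pr2 (w i)) = 0) ∧
      (∀ j k, symp (y j) (y k) = 0) ∧
      (∀ j k, symp (z j) (z k) = 0) ∧
      (∀ j k, symp (z j) (y k) = if j = k then 1 else 0) := by
  induction t with
  | zero =>
    exact ⟨fun j => j.elim0, fun j => j.elim0, fun j => j.elim0, fun j => j.elim0,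
      fun j => j.elim0, fun j => j.elim0, fun j => j.elim0, fun j => j.elim0⟩
  | succ t ih =>
    obtain ⟨y, z, hcoords, hyu, hzu, hyy, hzz, hzy⟩ := ih (by omega)
    set E0 : Fin (2*(g+1)) → ℤ := stdA ℤ (g+1) 0 with hE0
    set E1 : Fin (2*(g+1)) → ℤ := stdB ℤ (g+1) 0 with hE1
    -- basic pairings
    have hyE0 : ∀ k, symp (y k) E0 = 0 := fun k => by
      rw [hE0, symp_stdA, (hcoords k).2.1, neg_zero]
    have hyE1 : ∀ k, symp (y k) E1 = 0 := fun k => by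
      rw [hE1, symp_stdB]; exact (hcoords k).1
    have hzE0 : ∀ k, symp (z k) E0 = 0 := fun k => by
      rw [hE0, symp_stdA, (hcoords k).2.2.2, neg_zero]
    have hzE1 : ∀ k, symp (z k) E1 = 0 := fun k => by
      rw [hE1, symp_stdB]; exact (hcoords k).2.2.1
    have hE0E1 : symp E0 E1 = 1 := by
      rw [hE1, symp_stdB, hE0]; simp [stdA]
    have hE1E0 : symp E1 E0 = -1 := by
      rw [symp_swap, hE0E1]
    have hE0y : ∀ k, symp E0 (y k) = 0 := fun k => by
      rw [symp_swap (y k) E0, hyE0, neg_zero]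
    have hE1y : ∀ k, symp E1 (y k) = 0 := fun k => by
      rw [symp_swap (y k) E1, hyE1, neg_zero]
    have hE0z : ∀ k, symp E0 (z k) = 0 := fun k => by
      rw [symp_swap (z k) E0, hzE0, neg_zero]
    have hE1z : ∀ k, symp E1 (z k) = 0 := fun k => by
      rw [symp_swap (z k) E1, hzE1, neg_zero]
    have hyz : ∀ j k, symp (y j) (z k) = if k = j then -1 else 0 := fun j k => by
      rw [symp_swap (z k) (y j), hzy k j]
      split <;> norm_num
    -- constraint and frame families
    set D : ((Fin 2 ⊕ Fin (s+1)) ⊕ (Fin t ⊕ Fin t)) → Fin (2*(g+1)) → ℤ :=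
      Sum.elim (Sum.elim ![E0, E1] (fun i => pr2 (w i))) (Sum.elim y z) with hD
    set FR : (Fin 2 ⊕ (Fin t ⊕ Fin t)) → Fin (2*(g+1)) → ℤ :=
      Sum.elim ![E0, E1] (Sum.elim y z) with hFRdef
    set FR' : (Fin 2 ⊕ (Fin t ⊕ Fin t)) → Fin (2*(g+1)) → ℤ :=
      Sum.elim ![-E1, E0] (Sum.elim z (fun k => -(y k))) with hFR'def
    have hFRmem : ∀ a, ∃ j, D j = FR a ∨ D j = - FR a := by
      rintro (a2 | (k | k))
      · fin_cases a2
        · exact ⟨Sum.inl (Sum.inl 0), Or.inl (by simp [hD, hFRdef])⟩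
        · exact ⟨Sum.inl (Sum.inl 1), Or.inl (by simp [hD, hFRdef])⟩
      · exact ⟨Sum.inr (Sum.inl k), Or.inl (by simp [hD, hFRdef])⟩
      · exact ⟨Sum.inr (Sum.inr k), Or.inl (by simp [hD, hFRdef])⟩
    have hFR'mem : ∀ a, ∃ j, D j = FR' a ∨ D j = - FR' a := by
      rintro (a2 | (k | k))
      · fin_cases a2
        · exact ⟨Sum.inl (Sum.inl 1), Or.inr (by simp [hD, hFR'def])⟩
        · exact ⟨Sum.inl (Sum.inl 0), Or.inl (by simp [hD, hFR'def])⟩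
      · exact ⟨Sum.inr (Sum.inr k), Or.inl (by simp [hD, hFR'def])⟩
      · exact ⟨Sum.inr (Sum.inl k), Or.inr (by simp [hD, hFR'def])⟩
    have hpair : ∀ a b, symp (FR' a) (FR b) = if a = b then 1 else 0 := by
      rintro (a2 | (k | k)) (b2 | (k' | k'))
      · fin_cases a2 <;> fin_cases b2 <;>
          simp [hFRdef, hFR'def, symp_neg_left, hE1E0, hE0E1, symp_self]
      · fin_cases a2 <;>
          simp [hFRdef, hFR'def, symp_neg_left, hE1y, hE0y]
      · fin_cases a2 <;>
          simp [hFRdef, hFR'def, symp_neg_left, hE1z, hE0z]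
      · fin_cases b2 <;>
          simp [hFRdef, hFR'def, hzE0, hzE1]
      · rw [show FR' (Sum.inr (Sum.inl k)) = z k from rfl,
          show FR (Sum.inr (Sum.inl k')) = y k' from rfl, hzy k k']
        by_cases h : k = k'
        · subst h; simp
        · simp [h]
      · rw [show FR' (Sum.inr (Sum.inl k)) = z k from rfl,
          show FR (Sum.inr (Sum.inr k')) = z k' from rfl, hzz k k']
        simp
      · fin_cases b2 <;>
          simp [hFRdef, hFR'def, symp_neg_left, hyE0, hyE1]
      · rw [show FR' (Sum.inr (Sum.inr k)) = -(y k) from rfl,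
          show FR (Sum.inr (Sum.inl k')) = y k' from rfl, symp_neg_left, hyy k k']
        simp
      · rw [show FR' (Sum.inr (Sum.inr k)) = -(y k) from rfl,
          show FR (Sum.inr (Sum.inr k')) = z k' from rfl, symp_neg_left, hyz k k']
        by_cases h : k = k'
        · subst h; simp
        · simp [h, Ne.symm h]
    have harith : 2 * Fintype.card ((Fin 2 ⊕ Fin (s+1)) ⊕ (Fin t ⊕ Fin t))
        < 2 * (g+1) + Fintype.card (Fin 2 ⊕ (Fin t ⊕ Fin t)) := by
      simp [Fintype.card_sum, Fintype.card_fin]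
      omega
    obtain ⟨p, p', hp, hp', hpp⟩ := exists_sympOne D FR FR' hFRmem hFR'mem hpair harith
    -- properties of p and p'
    have hpE0 : symp p E0 = 0 := hp (Sum.inl (Sum.inl 0))
    have hpE1 : symp p E1 = 0 := hp (Sum.inl (Sum.inl 1))
    have hp'E0 : symp p' E0 = 0 := hp' (Sum.inl (Sum.inl 0))
    have hp'E1 : symp p' E1 = 0 := hp' (Sum.inl (Sum.inl 1))
    have hpcoord0 : p ⟨0, by omega⟩ = 0 := by
      have := hpE1; rw [hE1, symp_stdB] at this; exact this
    have hpcoord1 : p ⟨1, by omega⟩ = 0 := by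
      have := hpE0; rw [hE0, symp_stdA] at this; omega
    have hp'coord0 : p' ⟨0, by omega⟩ = 0 := by
      have := hp'E1; rw [hE1, symp_stdB] at this; exact this
    have hp'coord1 : p' ⟨1, by omega⟩ = 0 := by
      have := hp'E0; rw [hE0, symp_stdA] at this; omega
    have hpu : ∀ i, symp p (pr2 (w i)) = 0 := fun i => hp (Sum.inl (Sum.inr i))
    have hp'u : ∀ i, symp p' (pr2 (w i)) = 0 := fun i => hp' (Sum.inl (Sum.inr i))
    have hpy : ∀ k, symp p (y k) = 0 := fun k => hp (Sum.inr (Sum.inl k))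
    have hpz : ∀ k, symp p (z k) = 0 := fun k => hp (Sum.inr (Sum.inr k))
    have hp'y : ∀ k, symp p' (y k) = 0 := fun k => hp' (Sum.inr (Sum.inl k))
    have hp'z : ∀ k, symp p' (z k) = 0 := fun k => hp' (Sum.inr (Sum.inr k))
    refine ⟨Fin.snoc y p, Fin.snoc z (-p'), ?_, ?_, ?_, ?_, ?_, ?_⟩
    · intro j
      refine Fin.lastCases ?_ ?_ j
      · simp only [Fin.snoc_last, Pi.neg_apply]
        exact ⟨hpcoord0, hpcoord1, by rw [hp'coord0]; ring, by rw [hp'coord1]; ring⟩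
      · intro jj
        simp only [Fin.snoc_castSucc]
        exact hcoords jj
    · intro j i
      refine Fin.lastCases ?_ ?_ j
      · rw [Fin.snoc_last]; exact hpu i
      · intro jj; rw [Fin.snoc_castSucc]; exact hyu jj i
    · intro j i
      refine Fin.lastCases ?_ ?_ j
      · rw [Fin.snoc_last, symp_neg_left, hp'u i, neg_zero]
      · intro jj; rw [Fin.snoc_castSucc]; exact hzu jj i
    · intro j k
      refine Fin.lastCases ?_ ?_ j <;> [skip; intro jj] <;>
        refine Fin.lastCases ?_ ?_ k
      · rw [Fin.snoc_last, symp_self]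
      · intro kk; rw [Fin.snoc_last, Fin.snoc_castSucc]; exact hpy kk
      · rw [Fin.snoc_last, Fin.snoc_castSucc, symp_swap p (y jj), hpy jj, neg_zero]
      · intro kk; rw [Fin.snoc_castSucc, Fin.snoc_castSucc]; exact hyy jj kk
    · intro j k
      refine Fin.lastCases ?_ ?_ j <;> [skip; intro jj] <;>
        refine Fin.lastCases ?_ ?_ k
      · rw [Fin.snoc_last, symp_self]
      · intro kk
        rw [Fin.snoc_last, Fin.snoc_castSucc, symp_neg_left, hp'z kk, neg_zero]
      · rw [Fin.snoc_last, Fin.snoc_castSucc, symp_neg_right,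
          symp_swap p' (z jj), hp'z jj, neg_zero, neg_zero]
      · intro kk; rw [Fin.snoc_castSucc, Fin.snoc_castSucc]; exact hzz jj kk
    · intro j k
      refine Fin.lastCases ?_ ?_ j <;> [skip; intro jj] <;>
        refine Fin.lastCases ?_ ?_ k
      · rw [Fin.snoc_last, Fin.snoc_last, symp_neg_left, symp_swap p p', hpp, if_pos rfl]
        ring
      · intro kk
        rw [Fin.snoc_last, Fin.snoc_castSucc, symp_neg_left, hp'y kk, neg_zero,
          if_neg (Fin.castSucc_lt_last kk).ne']
      · rw [Fin.snoc_last, Fin.snoc_castSucc, symp_swap p (z jj), hpz jj, neg_zero,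
          if_neg (Fin.castSucc_lt_last jj).ne]
      · intro kk
        rw [Fin.snoc_castSucc, Fin.snoc_castSucc, hzy jj kk]
        by_cases h : jj = kk
        · subst h; simp
        · rw [if_neg h, if_neg (fun hcon => h (Fin.castSucc_inj.mp hcon))]

theorem coords01 {n : ℕ} {v : Fin n → ℤ} (hn : 1 < n) (h0 : v ⟨0, by omega⟩ = 0)
    (h1 : v ⟨1, by omega⟩ = 0) (jj : Fin n) (hjj : (jj:ℕ) < 2) : v jj = 0 := by
  rcases jj with ⟨jv, hv⟩
  interval_cases jv
  · exact h0
  · exact h1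

set_option maxHeartbeats 1600000 in
theorem stmt14' (g s : ℕ) (hs : s + 2 ≤ g)
    (w : Fin (s + 1) → Fin (2 * (g + 1)) → ℤ)
    (horth : ∀ i j, i ≠ j → symp (w i) (w j) = 0)
    (ha1 : ∀ i, w i ⟨0, by linarith⟩ = 1)
    (hgcd : IsUnimodular w) :
    ∃ x : Fin (g - 1 - s) → Fin (2 * (g + 1)) → ℤ,
      (∀ j, x j ⟨0, by linarith⟩ = 1) ∧
      (∀ j, x j ⟨1, by linarith⟩ = w 0 ⟨1, by linarith⟩) ∧
      (∀ j, Primitive (pr2 (x j))) ∧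
      (∀ i j, i ≠ j → symp (Fin.append w x i) (Fin.append w x j) = 0) ∧
      IsUnimodular (Fin.append w x) ∧
      ∀ (r : ℕ) (idx : Fin (r + 1) → Fin (s + 1)), StrictMono idx →
        IsUnimodular (fun i => pr2 (w (idx i))) →
        IsUnimodular (Fin.append (fun i => pr2 (w (idx i))) fun j => pr2 (x j)) := by
  classical
  obtain ⟨y, z, hcoords, hyu, hzu, hyy, hzz, hzy⟩ :=
    exists_yz g s w (g - 1 - s) (by omega)
  have hgdim : 1 < 2 * (g + 1) := by omega
  set X : Fin (g - 1 - s) → Fin (2 * (g + 1)) → ℤ := fun j => w 0 + y j with hX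
  -- basic symp facts
  have hyw : ∀ j i, symp (y j) (w i) = 0 := fun j i => by
    rw [symp_pr2_right (hcoords j).1 (hcoords j).2.1]
    exact hyu j i
  have hzw : ∀ j i, symp (z j) (w i) = 0 := fun j i => by
    rw [symp_pr2_right (hcoords j).2.2.1 (hcoords j).2.2.2]
    exact hzu j i
  have hzX : ∀ j k, symp (z j) (X k) = if j = k then 1 else 0 := fun j k => by
    rw [hX]
    rw [show (fun j => w 0 + y j) k = w 0 + y k from rfl, symp_add_right, hzw j 0, zero_add]
    exact hzy j k
  have hzprX : ∀ j k, symp (z j) (pr2 (X k)) = if j = k then 1 else 0 := fun j k => by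
    rw [← symp_pr2_right (hcoords j).2.2.1 (hcoords j).2.2.2]
    exact hzX j k
  have hwX : ∀ i' j', symp (w i') (X j') = 0 := by
    intro i' j'
    rw [hX, show (fun j => w 0 + y j) j' = w 0 + y j' from rfl, symp_add_right]
    have h2 : symp (w i') (y j') = 0 := by
      rw [symp_swap (y j') (w i'), hyw j' i', neg_zero]
    rw [h2, add_zero]
    by_cases h : i' = 0
    · rw [h, symp_self]
    · exact horth i' 0 h
  have hXX : ∀ i' j', symp (X i') (X j') = 0 := by
    intro i' j'
    rw [hX, show (fun j => w 0 + y j) i' = w 0 + y i' from rfl, symp_add_left]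
    have h1 : symp (w 0) (X j') = 0 := hwX 0 j'
    rw [hX] at h1
    rw [h1, zero_add, show (fun j => w 0 + y j) j' = w 0 + y j' from rfl, symp_add_right,
      hyw i' 0, hyy i' j', add_zero]
  refine ⟨X, ?_, ?_, ?_, ?_, ?_, ?_⟩
  · intro j
    rw [hX]
    show (w 0 + y j) ⟨0, by omega⟩ = 1
    rw [Pi.add_apply, ha1 0, (hcoords j).1, add_zero]
  · intro j
    rw [hX]
    show (w 0 + y j) ⟨1, by omega⟩ = w 0 ⟨1, by omega⟩
    rw [Pi.add_apply, (hcoords j).2.1, add_zero]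
  · intro j
    refine dualFam_isUnimodular ![sympR (z j)] ?_
    intro k l
    have hk : k = 0 := Subsingleton.elim k 0
    have hl : l = 0 := Subsingleton.elim l 0
    subst hk; subst hl
    rw [if_pos rfl]
    show sympR (z j) (pr2 (X j)) = 1
    rw [sympR_apply, hzprX j j, if_pos rfl]
  · intro i j
    refine Fin.addCases (motive := fun i => i ≠ j →
        symp (Fin.append w X i) (Fin.append w X j) = 0) ?_ ?_ i <;>
      [intro i'; intro i'] <;>
      refine Fin.addCases (motive := fun j => _ ≠ j →
        symp (Fin.append w X _) (Fin.append w X j) = 0) ?_ ?_ j <;>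
      [intro j' hij; intro j' hij; intro j' hij; intro j' hij]
    · rw [Fin.append_left, Fin.append_left]
      refine horth i' j' (fun h => hij ?_)
      rw [h]
    · rw [Fin.append_left, Fin.append_right]
      exact hwX i' j'
    · rw [Fin.append_right, Fin.append_left]
      rw [symp_swap (w j') (X i'), hwX j' i', neg_zero]
    · rw [Fin.append_right, Fin.append_right]
      exact hXX i' j'
  · obtain ⟨C, hC⟩ := hgcd.2
    obtain ⟨f, hf⟩ := exists_dual_of_compl hgcd.1 hC
    refine dualFam_isUnimodular
      (Fin.append (fun i => f i - ∑ k, (f i (X k)) • sympR (z k)) (fun j => sympR (z j))) ?_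
    intro k l
    refine Fin.addCases (motive := fun k => (Fin.append
        (fun i => f i - ∑ k, (f i (X k)) • sympR (z k)) (fun j => sympR (z j)) k)
        (Fin.append w X l) = if k = l then 1 else 0) ?_ ?_ k <;>
      [intro k'; intro k'] <;>
      refine Fin.addCases (motive := fun l => (Fin.append
        (fun i => f i - ∑ k, (f i (X k)) • sympR (z k)) (fun j => sympR (z j)) _)
        (Fin.append w X l) = if _ = l then 1 else 0) ?_ ?_ l <;>
      [intro l'; intro l'; intro l'; intro l']
    · rw [Fin.append_left, Fin.append_left, LinearMap.sub_apply, LinearMap.sum_apply]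
      have hz0 : ∀ k, (f k' (X k) • sympR (z k)) (w l') = 0 := fun k => by
        rw [LinearMap.smul_apply, sympR_apply, hzw k l', smul_eq_mul, mul_zero]
      rw [Finset.sum_congr rfl (fun k _ => hz0 k), Finset.sum_const_zero, sub_zero, hf k' l']
      by_cases h : k' = l'
      · subst h; rw [if_pos rfl, if_pos rfl]
      · rw [if_neg h, if_neg (fun hcon => h (by
          have := congrArg Fin.val hcon
          simp only [Fin.coe_castAdd] at this
          exact Fin.ext this))]
    · rw [Fin.append_left, Fin.append_right, LinearMap.sub_apply, LinearMap.sum_apply]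
      have hz1 : ∀ k, (f k' (X k) • sympR (z k)) (X l') = 0 ∨ True := fun _ => Or.inr trivial
      have hsum : ∑ k, (f k' (X k) • sympR (z k)) (X l') = f k' (X l') := by
        have he : ∀ k, (f k' (X k) • sympR (z k)) (X l')
            = if k = l' then f k' (X k) else 0 := fun k => by
          rw [LinearMap.smul_apply, sympR_apply, hzX k l', smul_eq_mul, mul_ite, mul_one, mul_zero]
        rw [Finset.sum_congr rfl (fun k _ => he k),
          Finset.sum_ite_eq' Finset.univ l' (fun k => f k' (X k)), if_pos (Finset.mem_univ l')]
      rw [hsum, sub_self]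
      rw [if_neg (fun hcon => ?_)]
      have := congrArg Fin.val hcon
      simp only [Fin.coe_castAdd, Fin.coe_natAdd] at this
      omega
    · rw [Fin.append_right, Fin.append_left, sympR_apply, hzw k' l']
      rw [if_neg (fun hcon => ?_)]
      have := congrArg Fin.val hcon
      simp only [Fin.coe_castAdd, Fin.coe_natAdd] at this
      omega
    · rw [Fin.append_right, Fin.append_right, sympR_apply, hzX k' l']
      by_cases h : k' = l'
      · subst h; rw [if_pos rfl, if_pos rfl]
      · rw [if_neg h, if_neg (fun hcon => h (by
          have := congrArg Fin.val hcon
          simp only [Fin.coe_natAdd] at this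
          exact Fin.ext (by omega)))]
  · intro r idx hmono huni
    obtain ⟨C', hC'⟩ := huni.2
    obtain ⟨f', hf'⟩ := exists_dual_of_compl huni.1 hC'
    refine dualFam_isUnimodular
      (Fin.append (fun i => f' i - ∑ k, (f' i (pr2 (X k))) • sympR (z k))
        (fun j => sympR (z j))) ?_
    intro k l
    refine Fin.addCases (motive := fun k => (Fin.append
        (fun i => f' i - ∑ k, (f' i (pr2 (X k))) • sympR (z k)) (fun j => sympR (z j)) k)
        (Fin.append (fun i => pr2 (w (idx i))) (fun j => pr2 (X j)) l)
        = if k = l then 1 else 0) ?_ ?_ k <;>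
      [intro k'; intro k'] <;>
      refine Fin.addCases (motive := fun l => (Fin.append
        (fun i => f' i - ∑ k, (f' i (pr2 (X k))) • sympR (z k)) (fun j => sympR (z j)) _)
        (Fin.append (fun i => pr2 (w (idx i))) (fun j => pr2 (X j)) l)
        = if _ = l then 1 else 0) ?_ ?_ l <;>
      [intro l'; intro l'; intro l'; intro l']
    · rw [Fin.append_left, Fin.append_left, LinearMap.sub_apply, LinearMap.sum_apply]
      have hz0 : ∀ k, (f' k' (pr2 (X k)) • sympR (z k)) (pr2 (w (idx l'))) = 0 := fun k => by
        rw [LinearMap.smul_apply, sympR_apply, hzu k (idx l'), smul_eq_mul, mul_zero]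
      rw [Finset.sum_congr rfl (fun k _ => hz0 k), Finset.sum_const_zero, sub_zero, hf' k' l']
      by_cases h : k' = l'
      · subst h; rw [if_pos rfl, if_pos rfl]
      · rw [if_neg h, if_neg (fun hcon => h (by
          have := congrArg Fin.val hcon
          simp only [Fin.coe_castAdd] at this
          exact Fin.ext this))]
    · rw [Fin.append_left, Fin.append_right, LinearMap.sub_apply, LinearMap.sum_apply]
      have hsum : ∑ k, (f' k' (pr2 (X k)) • sympR (z k)) (pr2 (X l')) = f' k' (pr2 (X l')) := by
        have he : ∀ k, (f' k' (pr2 (X k)) • sympR (z k)) (pr2 (X l'))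
            = if k = l' then f' k' (pr2 (X k)) else 0 := fun k => by
          rw [LinearMap.smul_apply, sympR_apply, hzprX k l', smul_eq_mul, mul_ite, mul_one,
            mul_zero]
        rw [Finset.sum_congr rfl (fun k _ => he k),
          Finset.sum_ite_eq' Finset.univ l' (fun k => f' k' (pr2 (X k))),
          if_pos (Finset.mem_univ l')]
      rw [hsum, sub_self]
      rw [if_neg (fun hcon => ?_)]
      have := congrArg Fin.val hcon
      simp only [Fin.coe_castAdd, Fin.coe_natAdd] at this
      omega
    · rw [Fin.append_right, Fin.append_left, sympR_apply, hzu k' (idx l')]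
      rw [if_neg (fun hcon => ?_)]
      have := congrArg Fin.val hcon
      simp only [Fin.coe_castAdd, Fin.coe_natAdd] at this
      omega
    · rw [Fin.append_right, Fin.append_right, sympR_apply, hzprX k' l']
      by_cases h : k' = l'
      · subst h; rw [if_pos rfl, if_pos rfl]
      · rw [if_neg h, if_neg (fun hcon => h (by
          have := congrArg Fin.val hcon
          simp only [Fin.coe_natAdd] at this
          exact Fin.ext (by omega)))]

end Aux

/-- Lemma 3.11 for `i = 2`. -/
theorem stmt14 (g s : ℕ) (hs : s + 2 ≤ g)
    (w : Fin (s + 1) → Fin (2 * (g + 1)) → ℤ)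
    (horth : ∀ i j, i ≠ j → symp (w i) (w j) = 0)
    (ha1 : ∀ i, w i ⟨0, by omega⟩ = 1)
    (hgcd : IsUnimodular w) :
    ∃ x : Fin (g - 1 - s) → Fin (2 * (g + 1)) → ℤ,
      (∀ j, x j ⟨0, by omega⟩ = 1) ∧
      (∀ j, x j ⟨1, by omega⟩ = w 0 ⟨1, by omega⟩) ∧
      (∀ j, Primitive (pr2 (x j))) ∧
      (∀ i j, i ≠ j → symp (Fin.append w x i) (Fin.append w x j) = 0) ∧
      IsUnimodular (Fin.append w x) ∧
      ∀ (r : ℕ) (idx : Fin (r + 1) → Fin (s + 1)), StrictMono idx →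
        IsUnimodular (fun i => pr2 (w (idx i))) →
        IsUnimodular (Fin.append (fun i => pr2 (w (idx i))) fun j => pr2 (x j)) :=
  stmt14' g s hs w horth ha1 hgcd

end Paper
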